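/- Let 𝔸 = F be the affine line with ⟨a,b,c⟩ = a-b+c and λ ▷_a b = λb+(1-λ)a, and for ζ ∈ F let [x,y]_ζ := ζy + (1-ζ)x. If ζ₁ ≠ ζ₂, then there is no bijective affine map f : 𝔸 → 𝔸 with f([x,y]_{ζ₁}) = [f(x),f(y)]_{ζ₂} for all x,y; i.e. the Lie affgebras (𝔸,[-,-]_{ζ₁}) and (𝔸,[-,-]_{ζ₂}) are non-isomorphic. -/
import Mathlib

/-- On the affine line `𝔸 = F`, for `ζ ∈ F` let `[x,y]_ζ := ζy + (1-ζ)x`.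
If `ζ₁ ≠ ζ₂`, there is no bijective affine map `f(x) = αx + β` (`α ≠ 0`)
intertwining the two brackets: the Lie affgebras `(𝔸,[-,-]_{ζ₁})` and
`(𝔸,[-,-]_{ζ₂})` are non-isomorphic. -/
theorem affine_line_zeta_brackets_nonisomorphic {F : Type*} [Field F]
    (ζ₁ ζ₂ : F) (h : ζ₁ ≠ ζ₂) :
    ¬ ∃ α β : F, α ≠ 0 ∧
      ∀ x y : F,
        α * (ζ₁ * y + (1 - ζ₁) * x) + β =
          ζ₂ * (α * y + β) + (1 - ζ₂) * (α * x + β) := by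
  rintro ⟨α, β, hα, hf⟩
  have := hf 0 1
  apply h
  have hαζ : α * ζ₁ = α * ζ₂ := by ring_nf at this ⊢; linear_combination this
  exact mul_left_cancel₀ hα hαζ
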